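/- The map 𝓕 is convex in the Loewner order: for all σ, σ^{(0)} ∈ ℝ^n_+, the matrix 𝓕(σ) − 𝓕(σ^{(0)}) + E is positive semidefinite, where E ∈ ℝ^{m×m} is the matrix with entries E_{j,k} := Σ_{i=1}^n (σ_i − σ_i^{(0)}) b_i(u_{σ^{(0)}}^{l_j}, u_{σ^{(0)}}^{l_k}) (so that −E equals the derivative 𝓕'(σ^{(0)})(σ − σ^{(0)})). -/

import Mathlib

open scoped BigOperators

private lemma helper_fst {H : Type*} [NormedAddCommGroup H] [NormedSpace ℝ H] {m : ℕ}
    (B : H →L[ℝ] H →L[ℝ] ℝ) (g : Fin m → ℝ) (x : Fin m → H) (v : H) :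
    B (∑ j, g j • x j) v = ∑ j, g j * B (x j) v := by
  simp [map_sum, map_smul]

private lemma helper_snd {H : Type*} [NormedAddCommGroup H] [NormedSpace ℝ H] {m : ℕ}
    (B : H →L[ℝ] H →L[ℝ] ℝ) (g : Fin m → ℝ) (x : Fin m → H) (v : H) :
    B v (∑ j, g j • x j) = ∑ j, g j * B v (x j) := by
  simp [map_sum, map_smul]

private lemma helper_l {H : Type*} [NormedAddCommGroup H] [NormedSpace ℝ H] {m : ℕ}
    (l' : H →L[ℝ] ℝ) (g : Fin m → ℝ) (x : Fin m → H) :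
    l' (∑ j, g j • x j) = ∑ j, g j * l' (x j) := by
  simp [map_sum, map_smul]

private lemma swap_factor {ι κ : Type*} [Fintype ι] [Fintype κ]
    (a : κ → ℝ) (c : ι → ℝ) (T : ι → κ → ℝ) :
    ∑ i, c i * ∑ j, a j * T i j = ∑ j, a j * ∑ i, c i * T i j := by
  simp_rw [Finset.mul_sum]
  rw [Finset.sum_comm]
  exact Finset.sum_congr rfl fun j _ => Finset.sum_congr rfl fun i _ => by ring

theorem stmt_12
    {H : Type*} [NormedAddCommGroup H] [InnerProductSpace ℝ H] [CompleteSpace H]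
    {n m : ℕ}
    (b0 : H →L[ℝ] H →L[ℝ] ℝ) (b : Fin n → H →L[ℝ] H →L[ℝ] ℝ)
    (hb0symm : ∀ u v : H, b0 u v = b0 v u)
    (hb0pos : ∀ v : H, 0 ≤ b0 v v)
    (hbsymm : ∀ i, ∀ u v : H, b i u v = b i v u)
    (hbpos : ∀ i, ∀ v : H, 0 ≤ b i v v)
    (C β : ℝ) (hβ : 0 < β) (hCβ : β ≤ C)
    (hcoer : ∀ v : H, β * ‖v‖ ^ 2 ≤ b0 v v + ∑ i, b i v v)
    (hbound : ∀ v : H, b0 v v + ∑ i, b i v v ≤ C * ‖v‖ ^ 2)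
    (u : (Fin n → ℝ) → (H →L[ℝ] ℝ) → H)
    (hu : ∀ σ : Fin n → ℝ, (∀ i, 0 < σ i) → ∀ l : H →L[ℝ] ℝ,
      ∀ v : H, b0 (u σ l) v + ∑ i, σ i * b i (u σ l) v = l v)
    (l : Fin m → (H →L[ℝ] ℝ)) :
    ∀ σ σ₀ : Fin n → ℝ, (∀ i, 0 < σ i) → (∀ i, 0 < σ₀ i) →
      Matrix.PosSemidef
        (Matrix.of fun j k : Fin m =>
          l k (u σ (l j)) - l k (u σ₀ (l j)) +
            ∑ i, (σ i - σ₀ i) * b i (u σ₀ (l j)) (u σ₀ (l k))) := by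
  intro σ σ₀ hσ hσ₀
  set x : Fin m → H := fun j => u σ (l j) with hx
  set y : Fin m → H := fun j => u σ₀ (l j) with hy
  have hux : ∀ j (v : H), b0 (x j) v + ∑ i, σ i * b i (x j) v = l j v :=
    fun j v => hu σ hσ (l j) v
  have huy : ∀ j (v : H), b0 (y j) v + ∑ i, σ₀ i * b i (y j) v = l j v :=
    fun j v => hu σ₀ hσ₀ (l j) v
  constructor
  · -- symmetry
    ext j k
    simp only [Matrix.conjTranspose_apply, Matrix.of_apply, star_trivial]
    have h1 : l j (x k) = l k (x j) := by
      rw [← hux k (x j), ← hux j (x k), hb0symm]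
      congr 1
      exact Finset.sum_congr rfl fun i _ => by rw [hbsymm]
    have h2 : l j (y k) = l k (y j) := by
      rw [← huy k (y j), ← huy j (y k), hb0symm]
      congr 1
      exact Finset.sum_congr rfl fun i _ => by rw [hbsymm]
    have h3 : ∑ i, (σ i - σ₀ i) * b i (y k) (y j)
        = ∑ i, (σ i - σ₀ i) * b i (y j) (y k) :=
      Finset.sum_congr rfl fun i _ => by rw [hbsymm]
    rw [h1, h2, h3]
  · intro g
    simp only [Finsupp.sum_fintype, zero_mul, mul_zero, Finset.sum_const_zero, implies_true,
      Matrix.of_apply, star_trivial]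
    simp_rw [mul_assoc, ← Finset.mul_sum]
    set U : H := ∑ j, g j • x j with hU
    set W : H := ∑ j, g j • y j with hW
    set c : Fin n → ℝ := fun i => σ i - σ₀ i with hc
    -- the "combined" functional
    have hA : ∀ v : H, b0 U v + ∑ i, σ i * b i U v = ∑ j, g j * l j v := by
      intro v
      rw [hU]
      simp only [helper_fst]
      rw [swap_factor, ← Finset.sum_add_distrib]
      simp_rw [← mul_add]
      exact Finset.sum_congr rfl fun j _ => by rw [hux]
    have hB : ∀ v : H, b0 W v + ∑ i, σ₀ i * b i W v = ∑ j, g j * l j v := by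
      intro v
      rw [hW]
      simp only [helper_fst]
      rw [swap_factor, ← Finset.sum_add_distrib]
      simp_rw [← mul_add]
      exact Finset.sum_congr rfl fun j _ => by rw [huy]
    -- each row of the quadratic form
    have hrow : ∀ j, (∑ k, (l k (x j) - l k (y j) + ∑ i, c i * b i (y j) (y k)) * g k)
        = (∑ k, g k * l k (x j)) - (∑ k, g k * l k (y j))
          + ∑ i, c i * b i (y j) W := by
      intro j
      simp only [sub_mul, add_mul, Finset.sum_add_distrib, Finset.sum_sub_distrib]
      congr 1
      · congr 1
        · exact Finset.sum_congr rfl fun k _ => by ring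
        · exact Finset.sum_congr rfl fun k _ => by ring
      · rw [hW]
        simp only [helper_snd]
        rw [swap_factor]
        exact Finset.sum_congr rfl fun k _ => by ring
    -- total quadratic form value
    have hT : (∑ j, g j * ∑ k, (l k (x j) - l k (y j) + ∑ i, c i * b i (y j) (y k)) * g k)
        = (b0 U U + ∑ i, σ i * b i U U) - 2 * (b0 U W + ∑ i, σ i * b i U W)
          + (b0 W W + ∑ i, σ i * b i W W) := by
      have e1 : ∑ j, g j * l j U = b0 U U + ∑ i, σ i * b i U U := (hA U).symm
      have e2 : ∑ j, g j * l j W = b0 U W + ∑ i, σ i * b i U W := (hA W).symm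
      have e3 : ∑ j, g j * l j W = b0 W W + ∑ i, σ₀ i * b i W W := (hB W).symm
      calc (∑ j, g j * ∑ k, (l k (x j) - l k (y j) + ∑ i, c i * b i (y j) (y k)) * g k)
          = (∑ j, g j * ((∑ k, g k * l k (x j)) - (∑ k, g k * l k (y j))
              + ∑ i, c i * b i (y j) W)) := by
            exact Finset.sum_congr rfl fun j _ => by rw [hrow]
        _ = (∑ j, g j * ∑ k, g k * l k (x j)) - (∑ j, g j * ∑ k, g k * l k (y j))
              + ∑ j, g j * ∑ i, c i * b i (y j) W := by
            simp only [mul_sub, mul_add, Finset.sum_add_distrib, Finset.sum_sub_distrib]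
        _ = (∑ k, g k * l k U) - (∑ k, g k * l k W) + ∑ i, c i * b i W W := by
            congr 1
            · congr 1
              · rw [← swap_factor]
                exact Finset.sum_congr rfl fun k _ => by rw [hU, helper_l]
              · rw [← swap_factor]
                exact Finset.sum_congr rfl fun k _ => by rw [hW, helper_l]
            · rw [← swap_factor]
              refine Finset.sum_congr rfl fun i _ => ?_
              congr 1
              rw [hW, helper_fst]
        _ = (b0 U U + ∑ i, σ i * b i U U) - 2 * (b0 U W + ∑ i, σ i * b i U W)
              + (b0 W W + ∑ i, σ i * b i W W) := by
            have hcsplit : ∑ i, c i * b i W W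
                = (∑ i, σ i * b i W W) - ∑ i, σ₀ i * b i W W := by
              rw [← Finset.sum_sub_distrib]
              exact Finset.sum_congr rfl fun i _ => by rw [hc]; ring
            rw [hcsplit]
            linarith [e1, e2, e3]
    rw [hT]
    -- relate to the quadratic form at U - W
    have hquad : ∀ B : H →L[ℝ] H →L[ℝ] ℝ,
        B (U - W) (U - W) = B U U - B U W - B W U + B W W := by
      intro B
      simp only [map_sub, ContinuousLinearMap.sub_apply]
      ring
    have hsym0 : b0 W U = b0 U W := hb0symm W U
    have hsymi : ∑ i, σ i * b i W U = ∑ i, σ i * b i U W :=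
      Finset.sum_congr rfl fun i _ => by rw [hbsymm]
    have hpos : 0 ≤ b0 (U - W) (U - W) + ∑ i, σ i * b i (U - W) (U - W) := by
      refine add_nonneg (hb0pos _) (Finset.sum_nonneg fun i _ =>
        mul_nonneg (hσ i).le (hbpos i _))
    have hexp : b0 (U - W) (U - W) + ∑ i, σ i * b i (U - W) (U - W)
        = (b0 U U + ∑ i, σ i * b i U U) - 2 * (b0 U W + ∑ i, σ i * b i U W)
          + (b0 W W + ∑ i, σ i * b i W W) := by
      rw [hquad b0]
      have hsum : ∑ i, σ i * b i (U - W) (U - W)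
          = (∑ i, σ i * b i U U) - (∑ i, σ i * b i U W) - (∑ i, σ i * b i W U)
            + ∑ i, σ i * b i W W := by
        simp only [hquad, mul_sub, mul_add, Finset.sum_add_distrib,
          Finset.sum_sub_distrib]
      rw [hsum, hsym0, hsymi]
      ring
    linarith [hpos, hexp]
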